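/- Let ε^{-1} = N+α ∉ ℕ with N = ⌊ε^{-1}⌋, α ∈ (0,1), and a > -2. Then for 0 ≤ x < 1, the operator value T^ε[(·)^{N+1}](x) = x^{ε^{-1}}(1-x)^{-(ε^{-1}+a)} ∫_0^x (1-v)^{ε^{-1}+a-1} v^{-α} dv admits the absolutely convergent power series representation T^ε[(·)^{N+1}](x) = (Γ(1-α)/Γ(N+1+a)) · Σ_{k=N+1}^∞ (Γ(k+a)/Γ(k+1-ε^{-1})) x^k. -/

import Mathlib

open Real Set Filter MeasureTheory intervalIntegral
open scoped Topology

namespace Stmt17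

noncomputable def gg (N : ℕ) (α a : ℝ) (k : ℕ) : ℝ :=
  Real.Gamma ((k : ℝ) + a) / Real.Gamma ((k : ℝ) + 1 - ((N : ℝ) + α))

noncomputable def PP (N : ℕ) (α a : ℝ) (k : ℕ) (w : ℝ) : ℝ :=
  gg N α a k * (w ^ ((k : ℝ) - ((N : ℝ) + α)) * (1 - w) ^ (((N : ℝ) + α) + a))

noncomputable def AA (N : ℕ) (α a : ℝ) (k : ℕ) (v : ℝ) : ℝ :=
  (((k : ℝ) - ((N : ℝ) + α)) * gg N α a k) *
    (v ^ ((k : ℝ) - 1 - ((N : ℝ) + α)) * (1 - v) ^ (((N : ℝ) + α) + a - 1))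

variable {N : ℕ} {α a : ℝ}

lemma arg1_pos (hN : 1 ≤ N) (ha : -2 < a) {k : ℕ} (hk : N + 1 ≤ k) :
    0 < (k : ℝ) + a := by
  have : (2 : ℝ) ≤ (k : ℝ) := by exact_mod_cast show 2 ≤ k by omega
  linarith

lemma arg2_pos (hα : α ∈ Set.Ioo (0:ℝ) 1) {k : ℕ} (hk : N ≤ k) :
    0 < (k : ℝ) + 1 - ((N : ℝ) + α) := by
  have : (N : ℝ) ≤ (k : ℝ) := by exact_mod_cast hk
  linarith [hα.2]

lemma gg_pos (hN : 1 ≤ N) (hα : α ∈ Set.Ioo (0:ℝ) 1) (ha : -2 < a) {k : ℕ}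
    (hk : N + 1 ≤ k) : 0 < gg N α a k :=
  div_pos (Real.Gamma_pos_of_pos (arg1_pos hN ha hk))
    (Real.Gamma_pos_of_pos (arg2_pos hα (by omega)))

lemma gg_rec (hN : 1 ≤ N) (hα : α ∈ Set.Ioo (0:ℝ) 1) (ha : -2 < a) {k : ℕ}
    (hk : N + 1 ≤ k) :
    ((k:ℝ) + 1 - ((N:ℝ)+α)) * gg N α a (k+1) = ((k:ℝ) + a) * gg N α a k := by
  have h1 := arg1_pos hN ha hk
  have h2 := arg2_pos hα (show N ≤ k by omega)
  have e1 : Real.Gamma (((k+1 : ℕ) : ℝ) + a) = ((k:ℝ)+a) * Real.Gamma ((k:ℝ)+a) := by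
    push_cast
    rw [show (k:ℝ)+1+a = ((k:ℝ)+a)+1 by ring, Real.Gamma_add_one h1.ne']
  have e2 : Real.Gamma (((k+1 : ℕ) : ℝ) + 1 - ((N:ℝ)+α))
      = ((k:ℝ)+1-((N:ℝ)+α)) * Real.Gamma ((k:ℝ)+1-((N:ℝ)+α)) := by
    push_cast
    rw [show (k:ℝ)+1+1-((N:ℝ)+α) = ((k:ℝ)+1-((N:ℝ)+α))+1 by ring,
      Real.Gamma_add_one h2.ne']
  have hg2 : Real.Gamma ((k:ℝ)+1-((N:ℝ)+α)) ≠ 0 := (Real.Gamma_pos_of_pos h2).ne'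
  unfold gg
  rw [e1, e2]
  field_simp

/-- The summand of the series (without abs). -/
noncomputable def hh (N : ℕ) (α a x : ℝ) (k : ℕ) : ℝ :=
  (if N + 1 ≤ k then gg N α a k else 0) * x ^ k

lemma summable_habs (hN : 1 ≤ N) (hα : α ∈ Set.Ioo (0:ℝ) 1) (ha : -2 < a)
    {x : ℝ} (hx : 0 ≤ x) (hx1 : x < 1) :
    Summable (fun k : ℕ => |hh N α a x k|) := by
  rcases eq_or_lt_of_le hx with h0 | hxpos
  · have : (fun k : ℕ => |hh N α a x k|) = fun _ => 0 := by
      funext k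
      rcases Nat.eq_zero_or_pos k with rfl | hk
      · simp [hh, show ¬ (N+1 ≤ 0) by omega]
      · simp [hh, ← h0, zero_pow hk.ne']
    rw [this]; exact summable_zero
  · set r : ℝ := (1+x)/2 with hr
    have hr1 : r < 1 := by rw [hr]; linarith
    have hxr : x < r := by rw [hr]; linarith
    have hrx : (0:ℝ) < r - x := by linarith
    obtain ⟨K₀, hK₀⟩ := exists_nat_ge ((x*a - r*(1 - ((N:ℝ)+α))) / (r - x))
    apply summable_of_ratio_norm_eventually_le hr1
    filter_upwards [eventually_ge_atTop (max (N+1) K₀)] with k hk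
    have hk1 : N+1 ≤ k := le_trans (le_max_left _ _) hk
    have hk0 : K₀ ≤ k := le_trans (le_max_right _ _) hk
    have key : x * ((k:ℝ)+a) ≤ r * ((k:ℝ)+1-((N:ℝ)+α)) := by
      have hcast : (K₀:ℝ) ≤ (k:ℝ) := by exact_mod_cast hk0
      have h1 : (x*a - r*(1-((N:ℝ)+α))) ≤ (k:ℝ) * (r - x) := by
        have := (div_le_iff₀ hrx).mp (hK₀.trans hcast)
        linarith
      nlinarith
    have hgk := gg_pos hN hα ha hk1
    have hgk1 := gg_pos hN hα ha (show N+1 ≤ k+1 by omega)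
    have hrec := gg_rec hN hα ha hk1
    have hd : 0 < (k:ℝ)+1-((N:ℝ)+α) := arg2_pos hα (by omega)
    have hxk : 0 ≤ x ^ k := pow_nonneg hx _
    simp only [hh, if_pos hk1, if_pos (show N+1 ≤ k+1 by omega)]
    rw [Real.norm_eq_abs, Real.norm_eq_abs, abs_abs, abs_abs,
      abs_of_nonneg (mul_nonneg hgk.le (pow_nonneg hx _)),
      abs_of_nonneg (mul_nonneg hgk1.le (pow_nonneg hx _)), pow_succ]
    have expand : ((k:ℝ)+1-((N:ℝ)+α)) * (gg N α a (k+1) * (x^k * x))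
        = (x*((k:ℝ)+a)) * (gg N α a k * x^k) := by
      calc ((k:ℝ)+1-((N:ℝ)+α)) * (gg N α a (k+1) * (x^k * x))
          = (((k:ℝ)+1-((N:ℝ)+α)) * gg N α a (k+1)) * (x^k*x) := by ring
        _ = (((k:ℝ)+a) * gg N α a k) * (x^k*x) := by rw [hrec]
        _ = _ := by ring
    have h2 : (x*((k:ℝ)+a)) * (gg N α a k * x^k)
        ≤ (r*((k:ℝ)+1-((N:ℝ)+α))) * (gg N α a k * x^k) :=
      mul_le_mul_of_nonneg_right key (mul_nonneg hgk.le hxk)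
    have h3 : ((k:ℝ)+1-((N:ℝ)+α)) * (gg N α a (k+1) * (x^k*x))
        ≤ ((k:ℝ)+1-((N:ℝ)+α)) * (r * (gg N α a k * x^k)) := by
      rw [expand, show ((k:ℝ)+1-((N:ℝ)+α)) * (r * (gg N α a k * x^k))
        = (r*((k:ℝ)+1-((N:ℝ)+α))) * (gg N α a k * x^k) from by ring]
      exact h2
    exact le_of_mul_le_mul_left h3 hd

lemma hasDerivAt_PP (hN : 1 ≤ N) (hα : α ∈ Set.Ioo (0:ℝ) 1) (ha : -2 < a) {k : ℕ}
    (hk : N+1 ≤ k) {v : ℝ} (hv : 0 < v) (hv1 : v < 1) :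
    HasDerivAt (PP N α a k) (AA N α a k v - AA N α a (k+1) v) v := by
  have h1v : (0:ℝ) < 1 - v := by linarith
  have hNk : ((N:ℝ)) + 1 ≤ (k:ℝ) := by exact_mod_cast hk
  have hc : 0 < (k:ℝ) - ((N:ℝ)+α) := by linarith [hα.2]
  have h₁ : HasDerivAt (fun w : ℝ => w ^ ((k:ℝ) - ((N:ℝ)+α)))
      (((k:ℝ) - ((N:ℝ)+α)) * v ^ ((k:ℝ) - ((N:ℝ)+α) - 1)) v :=
    Real.hasDerivAt_rpow_const (Or.inl hv.ne')
  have h₂ : HasDerivAt (fun w : ℝ => (1-w) ^ (((N:ℝ)+α) + a))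
      (-((((N:ℝ)+α) + a) * (1-v) ^ (((N:ℝ)+α) + a - 1))) v := by
    have hinner : HasDerivAt (fun w : ℝ => 1 - w) (-1) v := by
      simpa using (hasDerivAt_id v).const_sub 1
    have houter : HasDerivAt (fun y : ℝ => y ^ (((N:ℝ)+α) + a))
        ((((N:ℝ)+α) + a) * (1-v) ^ (((N:ℝ)+α) + a - 1)) (1-v) :=
      Real.hasDerivAt_rpow_const (Or.inl h1v.ne')
    have := houter.comp v hinner
    simpa [Function.comp_def] using this
  have hD := (h₁.mul h₂).const_mul (gg N α a k)
  have hrec := gg_rec hN hα ha hk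
  convert hD using 1
  · rfl
  · rfl
  · rfl
  have hE : (1-v) ^ (((N:ℝ)+α) + a) = (1-v) ^ (((N:ℝ)+α) + a - 1) * (1-v) := by
    conv_lhs => rw [show ((N:ℝ)+α) + a = (((N:ℝ)+α) + a - 1) + 1 by ring]
    rw [Real.rpow_add_one h1v.ne']
  have hV : v ^ ((k:ℝ) - ((N:ℝ)+α)) = v ^ ((k:ℝ) - 1 - ((N:ℝ)+α)) * v := by
    conv_lhs => rw [show (k:ℝ) - ((N:ℝ)+α) = ((k:ℝ) - 1 - ((N:ℝ)+α)) + 1 by ring]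
    rw [Real.rpow_add_one hv.ne']
  have hV2 : v ^ ((k:ℝ) - ((N:ℝ)+α) - 1) = v ^ ((k:ℝ) - 1 - ((N:ℝ)+α)) := by
    rw [show (k:ℝ) - ((N:ℝ)+α) - 1 = (k:ℝ) - 1 - ((N:ℝ)+α) by ring]
  have hcast1 : ((k+1:ℕ):ℝ) - ((N:ℝ)+α) = (k:ℝ) + 1 - ((N:ℝ)+α) := by push_cast; ring
  have hcast2 : ((k+1:ℕ):ℝ) - 1 - ((N:ℝ)+α) = (k:ℝ) - ((N:ℝ)+α) := by push_cast; ring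
  simp only [AA, hcast1, hcast2]
  rw [hE, hV, hV2]
  have hrec' : ((k:ℝ) + 1 - ((N:ℝ)+α)) * gg N α a (k+1) = ((k:ℝ) + a) * gg N α a k := hrec
  linear_combination (-(v ^ ((k:ℝ) - 1 - ((N:ℝ)+α)) * v * (1-v) ^ (((N:ℝ)+α) + a - 1))) * hrec'

lemma contOn_base (hx1 : (1:ℝ) > 0) {x : ℝ} (hxlt : x < 1) (e : ℝ) :
    ContinuousOn (fun v : ℝ => (1-v) ^ e) (Icc (0:ℝ) x) := by
  intro w hw
  have : (1:ℝ) - w ≠ 0 := by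
    have := hw.2; intro h; nlinarith [hw.2, hxlt]
  exact ((Real.continuousAt_rpow_const (1-w) e (Or.inl this)).comp
    ((continuous_const.sub continuous_id).continuousAt)).continuousWithinAt

lemma integrable_AA (hN : 1 ≤ N) (hα : α ∈ Set.Ioo (0:ℝ) 1) (ha : -2 < a) {k : ℕ}
    (hk : N+1 ≤ k) {x : ℝ} (hx : 0 ≤ x) (hx1 : x < 1) :
    IntervalIntegrable (AA N α a k) volume 0 x := by
  have hNk : ((N:ℝ)) + 1 ≤ (k:ℝ) := by exact_mod_cast hk
  have hexp : (-1:ℝ) < (k:ℝ) - 1 - ((N:ℝ)+α) := by linarith [hα.2]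
  have base : IntervalIntegrable
      (fun v : ℝ => v ^ ((k:ℝ) - 1 - ((N:ℝ)+α)) * (1-v) ^ (((N:ℝ)+α) + a - 1))
      volume 0 x := by
    refine (intervalIntegral.intervalIntegrable_rpow' hexp).mul_continuousOn ?_
    rw [Set.uIcc_of_le hx]
    exact contOn_base one_pos hx1 _
  exact base.const_mul _

lemma PP_cont (hα : α ∈ Set.Ioo (0:ℝ) 1) {k : ℕ} (hk : N+1 ≤ k) {x : ℝ}
    (hx1 : x < 1) : ContinuousOn (PP N α a k) (Icc (0:ℝ) x) := by
  have hNk : ((N:ℝ)) + 1 ≤ (k:ℝ) := by exact_mod_cast hk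
  have hc : (0:ℝ) ≤ (k:ℝ) - ((N:ℝ)+α) := by linarith [hα.2]
  apply ContinuousOn.mul continuousOn_const
  apply ContinuousOn.mul
  · intro w _
    exact (Real.continuousAt_rpow_const w _ (Or.inr hc)).continuousWithinAt
  · exact contOn_base one_pos hx1 _

lemma ftc_sum (hN : 1 ≤ N) (hα : α ∈ Set.Ioo (0:ℝ) 1) (ha : -2 < a)
    {x : ℝ} (hx : 0 < x) (hx1 : x < 1) (m : ℕ) :
    ∫ v in (0:ℝ)..x, (AA N α a (N+1) v - AA N α a (N+1+m) v)
      = ∑ j ∈ Finset.range m, PP N α a (N+1+j) x := by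
  have hcont : ContinuousOn (fun w => ∑ j ∈ Finset.range m, PP N α a (N+1+j) w)
      (Icc (0:ℝ) x) := by
    apply continuousOn_finset_sum
    intro j _
    exact PP_cont hα (by omega) hx1
  have hderiv : ∀ v ∈ Ioo (0:ℝ) x,
      HasDerivAt (fun w => ∑ j ∈ Finset.range m, PP N α a (N+1+j) w)
        (AA N α a (N+1) v - AA N α a (N+1+m) v) v := by
    intro v hv
    have hsum := HasDerivAt.fun_sum (u := Finset.range m)
      (A := fun j w => PP N α a (N+1+j) w)
      (A' := fun j => AA N α a (N+1+j) v - AA N α a (N+1+j+1) v)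
      (fun j _ => hasDerivAt_PP hN hα ha (by omega) hv.1 (lt_trans hv.2 hx1))
    have htel : ∑ j ∈ Finset.range m,
        (AA N α a (N+1+j) v - AA N α a (N+1+j+1) v)
        = AA N α a (N+1) v - AA N α a (N+1+m) v := by
      have := Finset.sum_range_sub' (f := fun j => AA N α a (N+1+j) v) (n := m)
      simpa [← add_assoc] using this
    rwa [htel] at hsum
  have hint : IntervalIntegrable
      (fun v => AA N α a (N+1) v - AA N α a (N+1+m) v) volume 0 x :=
    (integrable_AA hN hα ha (by omega) hx.le hx1).sub
      (integrable_AA hN hα ha (by omega) hx.le hx1)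
  have := intervalIntegral.integral_eq_sub_of_hasDerivAt_of_le hx.le hcont hderiv hint
  rw [this]
  have hzero : ∑ j ∈ Finset.range m, PP N α a (N+1+j) (0:ℝ) = 0 := by
    apply Finset.sum_eq_zero
    intro j _
    have hc : (0:ℝ) < ((N+1+j:ℕ):ℝ) - ((N:ℝ)+α) := by
      have : ((N:ℝ)) + 1 ≤ ((N+1+j:ℕ):ℝ) := by exact_mod_cast show N+1 ≤ N+1+j by omega
      linarith [hα.2]
    have hc' : ((N:ℝ) + 1 + (j:ℝ) - ((N:ℝ) + α)) ≠ 0 := by push_cast at hc; linarith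
    simp [PP, Real.zero_rpow hc']
  rw [hzero, sub_zero]

lemma sum_shift (x : ℝ) (m : ℕ) :
    ∑ k ∈ Finset.range (N+1+m), hh N α a x k
      = ∑ j ∈ Finset.range m, hh N α a x (N+1+j) := by
  induction m with
  | zero =>
    simp only [Nat.add_zero, Finset.range_zero, Finset.sum_empty]
    apply Finset.sum_eq_zero
    intro k hk
    have := Finset.mem_range.mp hk
    simp [hh, show ¬ (N+1 ≤ k) by omega]
  | succ m ih =>
    rw [show N+1+(m+1) = (N+1+m)+1 by omega, Finset.sum_range_succ,
      Finset.sum_range_succ, ih]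

lemma err_bound (hN : 1 ≤ N) (hα : α ∈ Set.Ioo (0:ℝ) 1) (ha : -2 < a)
    {x : ℝ} (hx : 0 < x) (hx1 : x < 1) (m : ℕ) :
    0 ≤ (∫ v in (0:ℝ)..x, AA N α a (N+1+m) v) ∧
    (∫ v in (0:ℝ)..x, AA N α a (N+1+m) v) ≤
      (gg N α a (N+1+m) * x ^ (N+1+m)) *
        (max 1 ((1-x) ^ (((N:ℝ)+α)+a-1)) * x ^ (-((N:ℝ)+α))) := by
  set k := N+1+m with hkdef
  have hkR : ((N:ℝ)) + 1 ≤ (k:ℝ) := by exact_mod_cast show N+1 ≤ k by omega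
  have hck1 : (0:ℝ) < (k:ℝ) - ((N:ℝ)+α) := by linarith [hα.2]
  have hck : (-1:ℝ) < (k:ℝ) - 1 - ((N:ℝ)+α) := by linarith
  have hgk : 0 < gg N α a k := gg_pos hN hα ha (by omega)
  set M := max 1 ((1-x) ^ (((N:ℝ)+α)+a-1)) with hM
  have hrepr : (∫ v in (0:ℝ)..x, AA N α a k v)
      = (((k:ℝ) - ((N:ℝ)+α)) * gg N α a k) *
        ∫ v in (0:ℝ)..x, v ^ ((k:ℝ)-1-((N:ℝ)+α)) * (1-v) ^ (((N:ℝ)+α)+a-1) := by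
    simp only [AA]; rw [intervalIntegral.integral_const_mul]
  have hInn : 0 ≤ ∫ v in (0:ℝ)..x, v ^ ((k:ℝ)-1-((N:ℝ)+α)) * (1-v) ^ (((N:ℝ)+α)+a-1) := by
    apply intervalIntegral.integral_nonneg hx.le
    intro u hu
    exact mul_nonneg (Real.rpow_nonneg hu.1 _)
      (Real.rpow_nonneg (by linarith [hu.2]) _)
  have hb1 : IntervalIntegrable
      (fun v => v ^ ((k:ℝ)-1-((N:ℝ)+α)) * (1-v) ^ (((N:ℝ)+α)+a-1)) volume 0 x := by
    refine (intervalIntegral.intervalIntegrable_rpow' hck).mul_continuousOn ?_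
    rw [Set.uIcc_of_le hx.le]; exact contOn_base one_pos hx1 _
  have hb2 : IntervalIntegrable (fun v => M * v ^ ((k:ℝ)-1-((N:ℝ)+α))) volume 0 x :=
    (intervalIntegral.intervalIntegrable_rpow' hck).const_mul M
  have hpt : ∀ v ∈ Icc (0:ℝ) x,
      v ^ ((k:ℝ)-1-((N:ℝ)+α)) * (1-v) ^ (((N:ℝ)+α)+a-1)
        ≤ M * v ^ ((k:ℝ)-1-((N:ℝ)+α)) := by
    intro v hv
    have h1v : (0:ℝ) < 1 - v := by linarith [hv.2]
    have hW : (1-v) ^ (((N:ℝ)+α)+a-1) ≤ M := by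
      rcases le_or_gt 0 (((N:ℝ)+α)+a-1) with hpos | hneg
      · exact le_max_of_le_left (Real.rpow_le_one h1v.le (by linarith [hv.1]) hpos)
      · exact le_max_of_le_right
          (Real.rpow_le_rpow_of_nonpos (by linarith) (by linarith [hv.2]) hneg.le)
    have hmm := mul_le_mul_of_nonneg_left hW
      (Real.rpow_nonneg hv.1 ((k:ℝ)-1-((N:ℝ)+α)))
    exact hmm.trans_eq (mul_comm _ _)
  have hmono := intervalIntegral.integral_mono_on hx.le hb1 hb2 hpt
  have hcompute : (∫ v in (0:ℝ)..x, M * v ^ ((k:ℝ)-1-((N:ℝ)+α)))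
      = M * (x ^ ((k:ℝ)-((N:ℝ)+α)) / ((k:ℝ)-((N:ℝ)+α))) := by
    rw [intervalIntegral.integral_const_mul, integral_rpow (Or.inl hck),
      show (k:ℝ)-1-((N:ℝ)+α)+1 = (k:ℝ)-((N:ℝ)+α) by ring,
      Real.zero_rpow hck1.ne', sub_zero]
  constructor
  · rw [hrepr]; exact mul_nonneg (mul_pos hck1 hgk).le hInn
  · rw [hrepr]
    have step1 := mul_le_mul_of_nonneg_left (hmono.trans_eq hcompute)
      (mul_pos hck1 hgk).le
    refine step1.trans_eq ?_
    have hxpow : x ^ ((k:ℝ)-((N:ℝ)+α)) = x ^ (k:ℕ) * x ^ (-((N:ℝ)+α)) := by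
      rw [show (k:ℝ)-((N:ℝ)+α) = ((k:ℕ):ℝ) + (-((N:ℝ)+α)) by ring,
        Real.rpow_add hx, Real.rpow_natCast]
    rw [hxpow]
    field_simp

end Stmt17

open Stmt17 in
/-- For `ε⁻¹ = N + α ∉ ℕ`, `α ∈ (0,1)`, `a > -2` and `0 ≤ x < 1`, the value
`T^ε[(·)^{N+1}](x) = x^{ε⁻¹}(1-x)^{-(ε⁻¹+a)} ∫_0^x (1-v)^{ε⁻¹+a-1} v^{-α} dv`
admits the absolutely convergent power-series representation
`(Γ(1-α)/Γ(N+1+a)) Σ_{k=N+1}^∞ (Γ(k+a)/Γ(k+1-ε⁻¹)) x^k`. -/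
theorem stmt17 (N : ℕ) (hN : 1 ≤ N) (α a : ℝ) (hα : α ∈ Set.Ioo (0 : ℝ) 1)
    (ha : -2 < a) :
    ∀ x : ℝ, 0 ≤ x → x < 1 →
      Summable (fun k : ℕ => |(if N + 1 ≤ k then
        Real.Gamma ((k : ℝ) + a) / Real.Gamma ((k : ℝ) + 1 - ((N : ℝ) + α)) else 0) * x ^ k|) ∧
      x ^ ((N : ℝ) + α) * (1 - x) ^ (-(((N : ℝ) + α) + a)) *
          ∫ v in (0 : ℝ)..x, (1 - v) ^ (((N : ℝ) + α) + a - 1) * v ^ (-α)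
        = Real.Gamma (1 - α) / Real.Gamma ((N : ℝ) + 1 + a) *
            ∑' k : ℕ, (if N + 1 ≤ k then
              Real.Gamma ((k : ℝ) + a) / Real.Gamma ((k : ℝ) + 1 - ((N : ℝ) + α)) else 0)
              * x ^ k := by
  intro x hx hx1
  have hfun : (fun k : ℕ => (if N + 1 ≤ k then
      Real.Gamma ((k : ℝ) + a) / Real.Gamma ((k : ℝ) + 1 - ((N : ℝ) + α)) else 0) * x ^ k)
      = hh N α a x := by
    funext k; simp [hh, gg]
  have habs := summable_habs hN hα ha hx hx1
  constructor
  · have : (fun k : ℕ => |(if N + 1 ≤ k then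
        Real.Gamma ((k : ℝ) + a) / Real.Gamma ((k : ℝ) + 1 - ((N : ℝ) + α)) else 0) * x ^ k|)
        = fun k => |hh N α a x k| := by
      funext k; rw [congrFun hfun k]
    rw [this]; exact habs
  rcases eq_or_lt_of_le hx with h0 | hxpos
  · -- x = 0
    subst h0
    have hβ : ((N:ℝ)+α) ≠ 0 := by
      have : (1:ℝ) ≤ (N:ℝ) := by exact_mod_cast hN
      have := hα.1
      positivity
    have hz : ∑' k : ℕ, hh N α a (0:ℝ) k = 0 := by
      have hzf : (fun k : ℕ => hh N α a (0:ℝ) k) = fun _ => 0 := by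
        funext k
        rcases Nat.eq_zero_or_pos k with rfl | hk
        · simp [hh, show ¬ (N+1 ≤ 0) by omega]
        · simp [hh, zero_pow hk.ne']
      rw [hzf, tsum_zero]
    rw [hfun, hz, mul_zero, Real.zero_rpow hβ, zero_mul, zero_mul]
  · -- x > 0
    rw [hfun]
    have hSum : Summable (hh N α a x) := habs.of_abs
    have h1α : (0:ℝ) < 1 - α := by linarith [hα.2]
    have h1x : (0:ℝ) < 1 - x := by linarith
    set q : ℝ := (1-α) * gg N α a (N+1) with hqdef
    have hq0 : 0 < q := mul_pos h1α (gg_pos hN hα ha le_rfl)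
    set J : ℝ := ∫ v in (0:ℝ)..x, (1 - v) ^ (((N:ℝ) + α) + a - 1) * v ^ (-α) with hJdef
    set T : ℝ := ∑' k : ℕ, hh N α a x k with hTdef
    have hA1 : ∀ v : ℝ, AA N α a (N+1) v
        = q * ((1-v) ^ (((N:ℝ)+α)+a-1) * v ^ (-α)) := by
      intro v
      simp only [AA]
      rw [show ((N+1:ℕ):ℝ) - 1 - ((N:ℝ)+α) = -α by push_cast; ring,
        show ((N+1:ℕ):ℝ) - ((N:ℝ)+α) = 1-α by push_cast; ring]
      ring
    have hIA1 : (∫ v in (0:ℝ)..x, AA N α a (N+1) v) = q * J := by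
      rw [intervalIntegral.integral_congr
        (g := fun v => q * ((1-v) ^ (((N:ℝ)+α)+a-1) * v ^ (-α))) (fun v _ => hA1 v),
        intervalIntegral.integral_const_mul]
    have hsplit : ∀ m : ℕ, q * J - (∫ v in (0:ℝ)..x, AA N α a (N+1+m) v)
        = ∑ j ∈ Finset.range m, PP N α a (N+1+j) x := by
      intro m
      have hf := ftc_sum hN hα ha hxpos hx1 m
      rw [intervalIntegral.integral_sub
        (integrable_AA hN hα ha (by omega) hxpos.le hx1)
        (integrable_AA hN hα ha (by omega) hxpos.le hx1), hIA1] at hf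
      exact hf
    -- error term tends to zero
    have htend : Tendsto (fun m : ℕ => N+1+m) atTop atTop := by
      apply tendsto_atTop_atTop.mpr
      intro b
      exact ⟨b, fun n hn => by omega⟩
    have hterm : Tendsto (fun m : ℕ => hh N α a x (N+1+m)) atTop (𝓝 0) :=
      hSum.tendsto_atTop_zero.comp htend
    have hErr0 : Tendsto (fun m : ℕ => ∫ v in (0:ℝ)..x, AA N α a (N+1+m) v)
        atTop (𝓝 0) := by
      have hble : ∀ m : ℕ, (∫ v in (0:ℝ)..x, AA N α a (N+1+m) v)
          ≤ hh N α a x (N+1+m) *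
            (max 1 ((1-x) ^ (((N:ℝ)+α)+a-1)) * x ^ (-((N:ℝ)+α))) := by
        intro m
        have := (err_bound hN hα ha hxpos hx1 m).2
        have hhh : hh N α a x (N+1+m) = gg N α a (N+1+m) * x ^ (N+1+m) := by
          simp [hh, show N+1 ≤ N+1+m by omega]
        rw [hhh]
        exact this
      have hblim : Tendsto (fun m : ℕ => hh N α a x (N+1+m) *
          (max 1 ((1-x) ^ (((N:ℝ)+α)+a-1)) * x ^ (-((N:ℝ)+α)))) atTop (𝓝 0) := by
        have := hterm.mul_const (max 1 ((1-x) ^ (((N:ℝ)+α)+a-1)) * x ^ (-((N:ℝ)+α)))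
        simpa using this
      exact squeeze_zero (fun m => (err_bound hN hα ha hxpos hx1 m).1) hble hblim
    have lim2 : Tendsto (fun m : ℕ => ∑ j ∈ Finset.range m, PP N α a (N+1+j) x)
        atTop (𝓝 (q * J)) := by
      have heq : (fun m : ℕ => ∑ j ∈ Finset.range m, PP N α a (N+1+j) x)
          = fun m => q * J - (∫ v in (0:ℝ)..x, AA N α a (N+1+m) v) :=
        funext fun m => (hsplit m).symm
      rw [heq]
      simpa using tendsto_const_nhds.sub hErr0
    -- partial sums converge to the tsum expression
    have hPPx : ∀ j : ℕ, PP N α a (N+1+j) x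
        = hh N α a x (N+1+j) * ((1-x) ^ (((N:ℝ)+α)+a) * x ^ (-((N:ℝ)+α))) := by
      intro j
      simp only [PP, hh, if_pos (show N+1 ≤ N+1+j by omega)]
      rw [show ((N+1+j:ℕ):ℝ) - ((N:ℝ)+α) = ((N+1+j:ℕ):ℝ) + (-((N:ℝ)+α)) by ring,
        Real.rpow_add hxpos, Real.rpow_natCast]
      ring
    have hseq : ∀ m : ℕ, ∑ j ∈ Finset.range m, PP N α a (N+1+j) x
        = (∑ k ∈ Finset.range (N+1+m), hh N α a x k) *
          ((1-x) ^ (((N:ℝ)+α)+a) * x ^ (-((N:ℝ)+α))) := by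
      intro m
      rw [sum_shift, Finset.sum_mul]
      exact Finset.sum_congr rfl (fun j _ => hPPx j)
    have hps : Tendsto (fun n : ℕ => ∑ k ∈ Finset.range n, hh N α a x k)
        atTop (𝓝 T) := hSum.hasSum.tendsto_sum_nat
    have hcomp' : Tendsto (fun m : ℕ => ∑ k ∈ Finset.range (N+1+m), hh N α a x k)
        atTop (𝓝 T) := hps.comp htend
    have lim1 : Tendsto (fun m : ℕ => ∑ j ∈ Finset.range m, PP N α a (N+1+j) x)
        atTop (𝓝 (T * ((1-x) ^ (((N:ℝ)+α)+a) * x ^ (-((N:ℝ)+α))))) := by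
      rw [funext hseq]
      exact hcomp'.mul_const _
    have hqJ : q * J = T * ((1-x) ^ (((N:ℝ)+α)+a) * x ^ (-((N:ℝ)+α))) :=
      tendsto_nhds_unique lim2 lim1
    -- final algebra
    have hNa : (0:ℝ) < (N:ℝ)+1+a := by
      have : (1:ℝ) ≤ (N:ℝ) := by exact_mod_cast hN
      linarith
    have g1 : Real.Gamma (1-α) ≠ 0 := (Real.Gamma_pos_of_pos h1α).ne'
    have g2 : Real.Gamma ((N:ℝ)+1+a) ≠ 0 := (Real.Gamma_pos_of_pos hNa).ne'
    have hCq : (Real.Gamma (1-α) / Real.Gamma ((N:ℝ)+1+a)) * q = 1 := by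
      rw [hqdef]
      simp only [gg]
      rw [show ((N+1:ℕ):ℝ)+1-((N:ℝ)+α) = (1-α)+1 by push_cast; ring,
        Real.Gamma_add_one h1α.ne',
        show (((N+1:ℕ)):ℝ) + a = (N:ℝ)+1+a by push_cast; ring]
      field_simp
    have hxb : (0:ℝ) < x ^ ((N:ℝ)+α) := Real.rpow_pos_of_pos hxpos _
    have h1xe : (0:ℝ) < (1-x) ^ (((N:ℝ)+α)+a) := Real.rpow_pos_of_pos h1x _
    have hneg : (1-x) ^ (-(((N:ℝ)+α)+a)) = ((1-x) ^ (((N:ℝ)+α)+a))⁻¹ :=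
      Real.rpow_neg h1x.le _
    have hxninv : x ^ (-((N:ℝ)+α)) = (x ^ ((N:ℝ)+α))⁻¹ := Real.rpow_neg hxpos.le _
    rw [hneg]
    apply mul_left_cancel₀ hq0.ne'
    calc q * (x ^ ((N:ℝ)+α) * ((1-x) ^ (((N:ℝ)+α)+a))⁻¹ * J)
        = (x ^ ((N:ℝ)+α) * ((1-x) ^ (((N:ℝ)+α)+a))⁻¹) * (q * J) := by ring
      _ = (x ^ ((N:ℝ)+α) * ((1-x) ^ (((N:ℝ)+α)+a))⁻¹) *
            (T * ((1-x) ^ (((N:ℝ)+α)+a) * (x ^ ((N:ℝ)+α))⁻¹)) := by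
          rw [hqJ, hxninv]
      _ = T := by field_simp
      _ = q * (Real.Gamma (1-α) / Real.Gamma ((N:ℝ)+1+a) * T) := by
          rw [show q * (Real.Gamma (1-α) / Real.Gamma ((N:ℝ)+1+a) * T)
            = ((Real.Gamma (1-α) / Real.Gamma ((N:ℝ)+1+a)) * q) * T by ring, hCq, one_mul]
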